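/- Let T be a graph with no induced P4 and no induced 2P3. If u1 and u2 are vertices of T such that u1 has two non-adjacent neighbours v,v' in T and u2 has two non-adjacent neighbours w,w' in T, and moreover T has no induced cycle of length ≥ 4, then u1 and u2 are adjacent. -/

import Mathlib

open SimpleGraph

/-- A b-coloring of `G` with `k` colors: a proper coloring using all `k` colors in which
every color class contains a b-vertex, i.e. a vertex with a neighbour of every other color. -/
def IsBColoring {V : Type*} (G : SimpleGraph V) {k : ℕ} (c : V → Fin k) : Prop :=
  (∀ ⦃u v : V⦄, G.Adj u v → c u ≠ c v) ∧
  ∀ i : Fin k, ∃ u : V, c u = i ∧ ∀ j : Fin k, j ≠ i → ∃ v : V, G.Adj u v ∧ c v = j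

/-- The b-chromatic number: the largest `k` such that `G` admits a b-coloring with `k` colors. -/
noncomputable def bChromaticNumber {V : Type*} (G : SimpleGraph V) : ℕ :=
  sSup {k : ℕ | ∃ c : V → Fin k, IsBColoring G c}

/-- `G` contains an induced copy of `H`. -/
def HasInducedCopy {V : Type*} {W : Type*} (G : SimpleGraph V) (H : SimpleGraph W) : Prop :=
  ∃ f : W → V, Function.Injective f ∧ ∀ a b : W, G.Adj (f a) (f b) ↔ H.Adj a b

/-- `G` contains an induced (chordless) cycle on `n` vertices. -/
def HasInducedCycle {V : Type*} (G : SimpleGraph V) (n : ℕ) : Prop :=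
  ∃ f : ZMod n → V, Function.Injective f ∧
    ∀ i j : ZMod n, G.Adj (f i) (f j) ↔ (j = i + 1 ∨ i = j + 1)

/-- A graph is chordal iff it has no induced cycle of length at least 4. -/
def IsChordalGraph {V : Type*} (G : SimpleGraph V) : Prop :=
  ∀ n : ℕ, 4 ≤ n → ¬ HasInducedCycle G n

/-- The graph on `Fin n` with the given edge list. -/
def graphOfList (n : ℕ) (E : List (Fin n × Fin n)) : SimpleGraph (Fin n) :=
  SimpleGraph.fromRel (fun a b => (a, b) ∈ E)
/-- The graph 2P₃: disjoint union of two paths on three vertices. -/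
def twoP3 : SimpleGraph (Fin 6) := graphOfList 6 [(0, 1), (1, 2), (3, 4), (4, 5)]

lemma noP4 {V : Type*} (T : SimpleGraph V) (hP4 : ¬ HasInducedCopy T (pathGraph 4))
    {a b c d : V} (hac : a ≠ c) (had : a ≠ d) (hbd : b ≠ d)
    (e1 : T.Adj a b) (e2 : T.Adj b c) (e3 : T.Adj c d)
    (n1 : ¬T.Adj a c) (n2 : ¬T.Adj a d) (n3 : ¬T.Adj b d) : False := by
  apply hP4
  refine ⟨![a,b,c,d], ?_, ?_⟩
  · intro i j hij
    fin_cases i <;> fin_cases j <;> simp_all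
  · intro i j
    fin_cases i <;> fin_cases j <;>
      (first
      | refine iff_of_false (T.irrefl) ?_
      | refine iff_of_true e1 ?_ | refine iff_of_true e1.symm ?_
      | refine iff_of_true e2 ?_ | refine iff_of_true e2.symm ?_
      | refine iff_of_true e3 ?_ | refine iff_of_true e3.symm ?_
      | refine iff_of_false n1 ?_ | refine iff_of_false (fun h => n1 h.symm) ?_
      | refine iff_of_false n2 ?_ | refine iff_of_false (fun h => n2 h.symm) ?_
      | refine iff_of_false n3 ?_ | refine iff_of_false (fun h => n3 h.symm) ?_) <;>
      simp [pathGraph_adj] <;> decide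

lemma zmod4_iff : ∀ i j : ZMod 4, (j = i + 1 ∨ i = j + 1) ↔
    ((i.val + 1) % 4 = j.val ∨ (j.val + 1) % 4 = i.val) := by decide

lemma noC4 {V : Type*} (T : SimpleGraph V) (hch : ¬ HasInducedCycle T 4)
    {a b c d : V} (hac : a ≠ c) (hbd : b ≠ d)
    (e1 : T.Adj a b) (e2 : T.Adj b c) (e3 : T.Adj c d) (e4 : T.Adj d a)
    (n1 : ¬T.Adj a c) (n2 : ¬T.Adj b d) : False := by
  apply hch
  refine ⟨![a,b,c,d], ?_, ?_⟩
  · intro i j hij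
    fin_cases i <;> fin_cases j <;> simp_all <;> rfl
  · intro i j
    rw [zmod4_iff]
    fin_cases i <;> fin_cases j <;>
      (first
      | refine iff_of_false (T.irrefl) ?_
      | refine iff_of_true e1 ?_ | refine iff_of_true e1.symm ?_
      | refine iff_of_true e2 ?_ | refine iff_of_true e2.symm ?_
      | refine iff_of_true e3 ?_ | refine iff_of_true e3.symm ?_
      | refine iff_of_true e4 ?_ | refine iff_of_true e4.symm ?_
      | refine iff_of_false n1 ?_ | refine iff_of_false (fun h => n1 h.symm) ?_
      | refine iff_of_false n2 ?_ | refine iff_of_false (fun h => n2 h.symm) ?_) <;>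
      decide

lemma no2P3 {V : Type*} (T : SimpleGraph V) (h2P3 : ¬ HasInducedCopy T twoP3)
    {a b c d e f : V}
    (hac : a ≠ c) (had : a ≠ d) (hae : a ≠ e) (haf : a ≠ f)
    (hbd : b ≠ d) (hbe : b ≠ e) (hbf : b ≠ f)
    (hcd : c ≠ d) (hce : c ≠ e) (hcf : c ≠ f) (hdf : d ≠ f)
    (e1 : T.Adj a b) (e2 : T.Adj b c) (e3 : T.Adj d e) (e4 : T.Adj e f)
    (n1 : ¬T.Adj a c) (n2 : ¬T.Adj a d) (n3 : ¬T.Adj a e) (n4 : ¬T.Adj a f)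
    (n5 : ¬T.Adj b d) (n6 : ¬T.Adj b e) (n7 : ¬T.Adj b f)
    (n8 : ¬T.Adj c d) (n9 : ¬T.Adj c e) (n10 : ¬T.Adj c f)
    (n11 : ¬T.Adj d f) : False := by
  apply h2P3
  refine ⟨![a,b,c,d,e,f], ?_, ?_⟩
  · intro i j hij
    fin_cases i <;> fin_cases j <;>
      first
      | rfl
      | (exact absurd hij e1.ne) | (exact absurd hij.symm e1.ne)
      | (exact absurd hij e2.ne) | (exact absurd hij.symm e2.ne)
      | (exact absurd hij e3.ne) | (exact absurd hij.symm e3.ne)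
      | (exact absurd hij e4.ne) | (exact absurd hij.symm e4.ne)
      | (exact absurd hij hac) | (exact absurd hij.symm hac)
      | (exact absurd hij had) | (exact absurd hij.symm had)
      | (exact absurd hij hae) | (exact absurd hij.symm hae)
      | (exact absurd hij haf) | (exact absurd hij.symm haf)
      | (exact absurd hij hbd) | (exact absurd hij.symm hbd)
      | (exact absurd hij hbe) | (exact absurd hij.symm hbe)
      | (exact absurd hij hbf) | (exact absurd hij.symm hbf)
      | (exact absurd hij hcd) | (exact absurd hij.symm hcd)
      | (exact absurd hij hce) | (exact absurd hij.symm hce)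
      | (exact absurd hij hcf) | (exact absurd hij.symm hcf)
      | (exact absurd hij hdf) | (exact absurd hij.symm hdf)
  · intro i j
    fin_cases i <;> fin_cases j <;>
      (first
      | refine iff_of_false (T.irrefl) ?_
      | refine iff_of_true e1 ?_ | refine iff_of_true e1.symm ?_
      | refine iff_of_true e2 ?_ | refine iff_of_true e2.symm ?_
      | refine iff_of_true e3 ?_ | refine iff_of_true e3.symm ?_
      | refine iff_of_true e4 ?_ | refine iff_of_true e4.symm ?_
      | refine iff_of_false n1 ?_ | refine iff_of_false (fun h => n1 h.symm) ?_
      | refine iff_of_false n2 ?_ | refine iff_of_false (fun h => n2 h.symm) ?_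
      | refine iff_of_false n3 ?_ | refine iff_of_false (fun h => n3 h.symm) ?_
      | refine iff_of_false n4 ?_ | refine iff_of_false (fun h => n4 h.symm) ?_
      | refine iff_of_false n5 ?_ | refine iff_of_false (fun h => n5 h.symm) ?_
      | refine iff_of_false n6 ?_ | refine iff_of_false (fun h => n6 h.symm) ?_
      | refine iff_of_false n7 ?_ | refine iff_of_false (fun h => n7 h.symm) ?_
      | refine iff_of_false n8 ?_ | refine iff_of_false (fun h => n8 h.symm) ?_
      | refine iff_of_false n9 ?_ | refine iff_of_false (fun h => n9 h.symm) ?_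
      | refine iff_of_false n10 ?_ | refine iff_of_false (fun h => n10 h.symm) ?_
      | refine iff_of_false n11 ?_ | refine iff_of_false (fun h => n11 h.symm) ?_) <;>
      simp [twoP3, graphOfList] <;> decide

/-- The main six-distinct-vertices case, assuming `u₁` adjacent to `w`. -/
lemma mainCase {V : Type*} (T : SimpleGraph V)
    (hP4 : ¬ HasInducedCopy T (pathGraph 4)) (hc4 : ¬ HasInducedCycle T 4)
    {u₁ u₂ v v' w w' : V}
    (hu : u₁ ≠ u₂) (hv : v ≠ v') (hw : w ≠ w')
    (hu1w' : u₁ ≠ w') (hu2v : u₂ ≠ v) (hu2v' : u₂ ≠ v')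
    (hvw : v ≠ w) (hvw' : v ≠ w') (hv'w : v' ≠ w) (hv'w' : v' ≠ w')
    (h1 : T.Adj u₁ v) (h2 : T.Adj u₁ v') (h3 : ¬ T.Adj v v')
    (h4 : T.Adj u₂ w) (h5 : T.Adj u₂ w') (h6 : ¬ T.Adj w w')
    (hadj : ¬ T.Adj u₁ u₂) (huw : T.Adj u₁ w) : False := by
  -- u₁ not adjacent to w', else C4 w-u₁-w'-u₂
  have nuw' : ¬ T.Adj u₁ w' := fun h =>
    noC4 T hc4 hw hu huw.symm h h5.symm h4 h6 hadj
  -- u₂ adjacent to at most one of v, v'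
  have hone : ¬ (T.Adj u₂ v ∧ T.Adj u₂ v') := fun hb =>
    noC4 T hc4 hv hu.symm hb.1.symm hb.2 h2.symm h1 h3 (fun hh => hadj hh.symm)
  -- v adjacent to w or to u₂ (else P4 v-u₁-w-u₂)
  have hvc : T.Adj v w ∨ T.Adj v u₂ := by
    by_contra hcon
    push_neg at hcon
    exact noP4 T hP4 hvw hu2v.symm hu h1.symm huw h4.symm hcon.1 hcon.2 hadj
  have hv'c : T.Adj v' w ∨ T.Adj v' u₂ := by
    by_contra hcon
    push_neg at hcon
    exact noP4 T hP4 hv'w hu2v'.symm hu h2.symm huw h4.symm hcon.1 hcon.2 hadj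
  by_cases hv'u2 : T.Adj v' u₂
  · have hnvu2 : ¬ T.Adj u₂ v := fun h => hone ⟨h, hv'u2.symm⟩
    have hvwadj : T.Adj v w := hvc.resolve_right (fun h => hnvu2 h.symm)
    -- v' adjacent to w, else C4 u₂-v'-u₁-w
    have hv'wadj : T.Adj v' w := by
      by_contra hcon
      exact noC4 T hc4 hu.symm hv'w hv'u2.symm h2.symm huw h4.symm
        (fun h => hadj h.symm) hcon
    -- w' adjacent to v', else P4 w'-u₂-v'-u₁
    have hw'v' : T.Adj w' v' := by
      by_contra hcon
      exact noP4 T hP4 hv'w'.symm hu1w'.symm hu.symm h5.symm hv'u2.symm h2.symm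
        hcon (fun h => nuw' h.symm) (fun h => hadj h.symm)
    -- w' adjacent to v, else P4 w'-v'-u₁-v
    have hw'v : T.Adj w' v := by
      by_contra hcon
      exact noP4 T hP4 hu1w'.symm hvw'.symm hv.symm
        hw'v' h2.symm h1 (fun h => nuw' h.symm) hcon (fun h => h3 h.symm)
    -- C4 w'-v-w-u₂
    exact noC4 T hc4 hw.symm hu2v.symm hw'v hvwadj h4.symm h5
      (fun h => h6 h.symm) (fun h => hnvu2 h.symm)
  · have hv'wadj : T.Adj v' w := hv'c.resolve_right hv'u2
    -- w' adjacent to v', else P4 w'-u₂-w-v'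
    have hw'v' : T.Adj w' v' := by
      by_contra hcon
      exact noP4 T hP4 hw.symm hv'w'.symm hu2v' h5.symm h4 hv'wadj.symm
        (fun h => h6 h.symm) hcon (fun h => hv'u2 h.symm)
    -- C4 w'-v'-w-u₂
    exact noC4 T hc4 hw.symm hu2v'.symm hw'v' hv'wadj h4.symm h5
      (fun h => h6 h.symm) hv'u2

/-- In a chordal graph with no induced P₄ and no induced 2P₃, any two distinct vertices each
having a pair of non-adjacent neighbours are adjacent. -/
theorem adj_of_nonadjacent_neighbours {V : Type*} (T : SimpleGraph V)
    (hP4 : ¬ HasInducedCopy T (pathGraph 4)) (h2P3 : ¬ HasInducedCopy T twoP3)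
    (hchordal : IsChordalGraph T)
    {u₁ u₂ v v' w w' : V} (hu : u₁ ≠ u₂) (hv : v ≠ v') (hw : w ≠ w')
    (h1 : T.Adj u₁ v) (h2 : T.Adj u₁ v') (h3 : ¬ T.Adj v v')
    (h4 : T.Adj u₂ w) (h5 : T.Adj u₂ w') (h6 : ¬ T.Adj w w') :
    T.Adj u₁ u₂ := by
  have hc4 : ¬ HasInducedCycle T 4 := hchordal 4 le_rfl
  by_cases nu2v : u₂ = v
  · rw [nu2v]; exact h1
  by_cases nu2v' : u₂ = v'
  · rw [nu2v']; exact h2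
  by_cases nu1w : u₁ = w
  · rw [nu1w]; exact h4.symm
  by_cases nu1w' : u₁ = w'
  · rw [nu1w']; exact h5.symm
  by_contra hadj
  have hu1w : u₁ ≠ w := nu1w
  have hu1w'n : u₁ ≠ w' := nu1w'
  -- identification cases among {v,v'} and {w,w'}
  by_cases hvw : v = w
  · subst hvw
    by_cases c2 : T.Adj u₁ w'
    · exact noC4 T hc4 hu hw h1 h4.symm h5 c2.symm hadj h6
    · exact noP4 T hP4 hu hu1w'n hw h1 h4.symm h5 hadj c2 h6
  by_cases hvw' : v = w'
  · subst hvw'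
    by_cases c1 : T.Adj u₁ w
    · exact noC4 T hc4 hu hw.symm h1 h5.symm h4 c1.symm hadj (fun h => h6 h.symm)
    · exact noP4 T hP4 hu hu1w hw.symm h1 h5.symm h4 hadj c1 (fun h => h6 h.symm)
  by_cases hv'w : v' = w
  · subst hv'w
    by_cases c2 : T.Adj u₁ w'
    · exact noC4 T hc4 hu hw h2 h4.symm h5 c2.symm hadj h6
    · exact noP4 T hP4 hu hu1w'n hw h2 h4.symm h5 hadj c2 h6
  by_cases hv'w' : v' = w'
  · subst hv'w'
    by_cases c1 : T.Adj u₁ w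
    · exact noC4 T hc4 hu hw.symm h2 h5.symm h4 c1.symm hadj (fun h => h6 h.symm)
    · exact noP4 T hP4 hu hu1w hw.symm h2 h5.symm h4 hadj c1 (fun h => h6 h.symm)
  -- now all six vertices are distinct
  by_cases c1 : T.Adj u₁ w
  · exact mainCase T hP4 hc4 hu hv hw hu1w'n nu2v nu2v' hvw hvw' hv'w hv'w'
      h1 h2 h3 h4 h5 h6 hadj c1
  by_cases c2 : T.Adj u₁ w'
  · exact mainCase T hP4 hc4 hu hv hw.symm hu1w nu2v nu2v' hvw' hvw hv'w' hv'w
      h1 h2 h3 h5 h4 (fun h => h6 h.symm) hadj c2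
  by_cases c3 : T.Adj u₂ v
  · exact mainCase T hP4 hc4 hu.symm hw hv nu2v' hu1w hu1w'n
      (fun h => hvw h.symm) (fun h => hv'w h.symm) (fun h => hvw' h.symm)
      (fun h => hv'w' h.symm)
      h4 h5 h6 h1 h2 h3 (fun h => hadj h.symm) c3
  by_cases c4 : T.Adj u₂ v'
  · exact mainCase T hP4 hc4 hu.symm hw hv.symm nu2v hu1w hu1w'n
      (fun h => hv'w h.symm) (fun h => hvw h.symm) (fun h => hv'w' h.symm)
      (fun h => hvw' h.symm)
      h4 h5 h6 h2 h1 (fun h => h3 h.symm) (fun h => hadj h.symm) c4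
  -- no cross edges from u₁,u₂; check edges between {v,v'} and {w,w'}
  by_cases b1 : T.Adj v w
  · exact noP4 T hP4 hu1w hu (Ne.symm nu2v) h1 b1 h4.symm c1 hadj
      (fun h => c3 h.symm)
  by_cases b2 : T.Adj v w'
  · exact noP4 T hP4 hu1w'n hu (Ne.symm nu2v) h1 b2 h5.symm c2 hadj
      (fun h => c3 h.symm)
  by_cases b3 : T.Adj v' w
  · exact noP4 T hP4 hu1w hu (Ne.symm nu2v') h2 b3 h4.symm c1 hadj
      (fun h => c4 h.symm)
  by_cases b4 : T.Adj v' w'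
  · exact noP4 T hP4 hu1w'n hu (Ne.symm nu2v') h2 b4 h5.symm c2 hadj
      (fun h => c4 h.symm)
  -- 2P3 on v-u₁-v' and w-u₂-w'
  exact no2P3 T h2P3 hv hvw (Ne.symm nu2v) hvw' hu1w hu hu1w'n hv'w
    (Ne.symm nu2v') hv'w' hw h1.symm h2 h4.symm h5
    h3 b1 (fun h => c3 h.symm) b2 c1 hadj c2 b3 (fun h => c4 h.symm) b4 h6
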